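/- Let n ≥ 0 and let X be a metric space. Suppose that for every ε > 0 there exists δ > 0 such that: for every set S, every simplicial complex K ⊆ Δ(S), every subset A ⊆ X, and every δ-partition of unity f: X → K with f(A) ⊆ K^(n), there exists a map h: X → K^(n) which agrees with f on A, satisfies supp(h(x)) ⊆ supp(f(x)) for all x ∈ X, and is an ε-partition of unity. If X is large scale paracompact, then X has asymptotic dimension at most n. -/

import Mathlib

open Function Metric ENNReal

noncomputable section

/-- `ℓ¹(S)`: real-valued functions on `S` with finite `ℓ¹`-norm, with the `ℓ¹` metric. -/
abbrev ellOne (S : Type u) : Type u := lp (fun _ : S => ℝ) 1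

/-- The full simplex `Δ(S) ⊆ ℓ¹(S)`. -/
def fullSimplex (S : Type u) : Set (ellOne S) :=
  {p | (∀ s, 0 ≤ p s) ∧ (support (p : S → ℝ)).Finite ∧ ∑' s, p s = 1}

/-- The `n`-skeleton `Δ(S)^(n)` of the full simplex. -/
def skeleton (S : Type u) (n : ℕ) : Set (ellOne S) :=
  {p ∈ fullSimplex S | (support (p : S → ℝ)).encard ≤ n + 1}

/-- A simplicial complex on `S`: a subset of `Δ(S)` closed under passing to
points whose support is contained in the support of a member. -/
def IsSimplicialComplex {S : Type u} (K : Set (ellOne S)) : Prop :=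
  K ⊆ fullSimplex S ∧
    ∀ p ∈ K, ∀ q ∈ fullSimplex S,
      support (q : S → ℝ) ⊆ support (p : S → ℝ) → q ∈ K

/-- The star of a vertex `v` in `K`. -/
def star {S : Type u} (K : Set (ellOne S)) (v : S) : Set (ellOne S) :=
  {p ∈ K | 0 < p v}

/-- `f` is `(λ, C)`-Lipschitz. -/
def IsLipschitzLC {X Y : Type*} [MetricSpace X] [MetricSpace Y]
    (l C : ℝ) (f : X → Y) : Prop :=
  ∀ x y, dist (f x) (f y) ≤ l * dist x y + C

/-- A family of sets is uniformly bounded. -/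
def UniformlyBounded {X : Type*} [MetricSpace X] {ι : Type*} (U : ι → Set X) : Prop :=
  ∃ M : ℝ, ∀ i, ∀ x ∈ U i, ∀ y ∈ U i, dist x y ≤ M

/-- `U` is a cover of the whole space. -/
def IsCover {X : Type*} {ι : Type*} (U : ι → Set X) : Prop := ∀ x, ∃ i, x ∈ U i

/-- The Lebesgue number `inf_x sup_i dist(x, X∖Uᵢ)` of a family, as a value in `ℝ≥0∞`. -/
def lebesgue {X : Type*} [MetricSpace X] {ι : Type*} (U : ι → Set X) : ℝ≥0∞ :=
  ⨅ x : X, ⨆ i, EMetric.infEdist x (U i)ᶜ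

/-- The multiplicity of `U` is at most `m`. -/
def MultiplicityLE {X : Type*} [MetricSpace X] {ι : Type*} (U : ι → Set X) (m : ℕ) : Prop :=
  ∀ x : X, {i | 0 < Metric.infDist x ((U i)ᶜ)}.encard ≤ m

/-- `f : X → K` is a `δ`-partition of unity. -/
def IsDeltaPartitionOfUnity {X : Type*} [MetricSpace X] {S : Type u}
    (δ : ℝ) (K : Set (ellOne S)) (f : X → ellOne S) : Prop :=
  (∀ x, f x ∈ K) ∧ IsLipschitzLC δ δ f ∧
    UniformlyBounded (fun v : S => f ⁻¹' star K v) ∧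
    ENNReal.ofReal (1 / δ) ≤ lebesgue (fun v : S => f ⁻¹' star K v)

/-- `X` is large scale paracompact. -/
def LSParacompact (X : Type u) [MetricSpace X] : Prop :=
  ∀ (ι : Type u) (U : ι → Set X), IsCover U → UniformlyBounded U →
    ∀ l C : ℝ, 0 < l → 0 < C →
      ∃ (S : Type u) (K : Set (ellOne S)) (f : X → ellOne S),
        IsSimplicialComplex K ∧ (∀ x, f x ∈ K) ∧ IsLipschitzLC l C f ∧
        UniformlyBounded (fun v : S => f ⁻¹' star K v) ∧
        ∀ i, ∃ v : S, U i ⊆ f ⁻¹' star K v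

/-- `X` has asymptotic dimension at most `n`. -/
def AsdimLE (X : Type u) [MetricSpace X] (n : ℕ) : Prop :=
  ∀ R : ℝ, 0 < R → ∃ (ι : Type u) (U : ι → Set X),
    IsCover U ∧ UniformlyBounded U ∧ MultiplicityLE U (n + 1) ∧
    ENNReal.ofReal R ≤ lebesgue U

/-- `X` has Property A. -/
def PropertyA (X : Type u) [MetricSpace X] : Prop :=
  ∀ R ε : ℝ, 0 < R → 0 < ε →
    ∃ (M : ℝ) (S : Type u) (φ : S → X → ℝ), 0 < M ∧
      (∀ s x, 0 ≤ φ s x ∧ φ s x ≤ 1) ∧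
      (∀ x, (support fun s => φ s x).Finite) ∧
      (∀ x, ∑' s, φ s x = 1) ∧
      (∀ x y, dist x y ≤ R → ∑' s, |φ s x - φ s y| < ε) ∧
      (∀ s, ∀ x ∈ support (φ s), ∀ y ∈ support (φ s), dist x y ≤ M)

/-- `f` has `(R, ε)` variation. -/
def HasVariation {X Y : Type*} [MetricSpace X] [MetricSpace Y] (R ε : ℝ) (f : X → Y) : Prop :=
  ∀ x y, dist x y ≤ R → dist (f x) (f y) < ε

/-- `g` is a coarse embedding. -/
def CoarseEmbedding {X Y : Type*} [MetricSpace X] [MetricSpace Y] (g : X → Y) : Prop :=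
  ∃ ρminus ρplus : ℝ → ℝ, Monotone ρminus ∧ Monotone ρplus ∧
    Filter.Tendsto ρminus Filter.atTop Filter.atTop ∧
    ∀ x y, ρminus (dist x y) ≤ dist (g x) (g y) ∧ dist (g x) (g y) ≤ ρplus (dist x y)

/-- `X` has bounded geometry: balls of any fixed radius have uniformly bounded cardinality. -/
def BoundedGeometry (X : Type*) [MetricSpace X] : Prop :=
  ∀ r : ℝ, 0 < r → ∃ N : ℕ, ∀ x : X, (Metric.ball x r).encard ≤ N

/-- Theorem B: if fillers into the `n`-skeleton always exist as in
Theorem A and `X` is large scale paracompact, then `asdim X ≤ n`. -/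
theorem theoremB (X : Type u) [MetricSpace X] (n : ℕ)
    (hfill : ∀ ε : ℝ, 0 < ε → ∃ δ : ℝ, 0 < δ ∧
      ∀ (S : Type u) (K : Set (ellOne S)) (A : Set X) (f : X → ellOne S),
        IsSimplicialComplex K → IsDeltaPartitionOfUnity δ K f →
        (∀ a ∈ A, f a ∈ K ∩ skeleton S n) →
        ∃ h : X → ellOne S,
          (∀ x, h x ∈ K ∩ skeleton S n) ∧
          (∀ a ∈ A, h a = f a) ∧
          (∀ x, support ((h x : S → ℝ)) ⊆ support ((f x : S → ℝ))) ∧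
          IsDeltaPartitionOfUnity ε K h)
    (hpara : LSParacompact X) : AsdimLE X n := by
  intro R hR
  obtain ⟨δ, hδ, hf⟩ := hfill (1/R) (by positivity)
  set r : ℝ := 1/δ + 1 with hr
  have hrpos : 0 < r := by positivity
  obtain ⟨S, K, f, hK, hfK, hflip, hfub, hfst⟩ :=
    hpara X (fun x => Metric.ball x r) (fun x => ⟨x, Metric.mem_ball_self hrpos⟩)
      ⟨2*r, fun c x hx y hy => by
        have h1 : dist x c < r := Metric.mem_ball.mp hx
        have h2 : dist y c < r := Metric.mem_ball.mp hy
        calc dist x y ≤ dist x c + dist c y := dist_triangle x c y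
          _ ≤ 2*r := by rw [dist_comm c y]; linarith⟩ δ δ hδ hδ
  have hleb : ENNReal.ofReal (1/δ) ≤ lebesgue (fun v : S => f ⁻¹' star K v) := by
    apply le_iInf; intro x
    obtain ⟨v, hv⟩ := hfst x
    refine le_trans ?_ (le_iSup _ v)
    refine EMetric.le_infEdist.mpr ?_
    intro y hy
    have hyb : y ∉ Metric.ball x r := fun h => hy (hv h)
    rw [Metric.mem_ball, not_lt] at hyb
    have : (1:ℝ)/δ ≤ dist x y := by rw [dist_comm]; simp only [hr] at hyb ⊢; linarith
    calc ENNReal.ofReal (1/δ) ≤ ENNReal.ofReal (dist x y) := ENNReal.ofReal_le_ofReal this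
      _ = edist x y := (edist_dist x y).symm
  obtain ⟨h, hhmem, -, -, hhK, hhlip, hhub, hhleb⟩ :=
    hf S K ∅ f hK ⟨hfK, hflip, hfub, hleb⟩ (by simp)
  refine ⟨S, fun v => h ⁻¹' star K v, ?_, hhub, ?_, ?_⟩
  · -- cover
    intro x
    obtain ⟨hxK, hxsk⟩ := hhmem x
    obtain ⟨hnn, hfin, hsum⟩ := hK.1 hxK
    by_contra hc
    push_neg at hc
    have hz : ∀ v, (h x : S → ℝ) v = 0 := by
      intro v
      by_contra h0
      exact hc v ⟨hxK, lt_of_le_of_ne (hnn v) (Ne.symm h0)⟩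
    have : (∑' s, (h x : S → ℝ) s) = 0 := by
      simp [hz]
    rw [hsum] at this
    exact one_ne_zero this
  · -- multiplicity
    intro x
    have hsub : {v | 0 < Metric.infDist x ((fun v => h ⁻¹' star K v) v)ᶜ}
        ⊆ support ((h x : S → ℝ)) := by
      intro v hv
      simp only [Set.mem_setOf_eq] at hv
      have hxv : x ∈ h ⁻¹' star K v := by
        by_contra hxn
        have h0 := Metric.infDist_zero_of_mem (show x ∈ (h ⁻¹' star K v)ᶜ from hxn)
        rw [h0] at hv
        exact lt_irrefl 0 hv
      exact ne_of_gt hxv.2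
    have hsk := (hhmem x).2.2
    calc {v | 0 < Metric.infDist x ((fun v => h ⁻¹' star K v) v)ᶜ}.encard
        ≤ (support ((h x : S → ℝ))).encard := Set.encard_mono hsub
      _ ≤ (n : ℕ∞) + 1 := hsk
      _ = ((n + 1 : ℕ) : ℕ∞) := by push_cast; ring
  · -- lebesgue
    rwa [one_div_one_div] at hhleb

end
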